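/- Let k ≥ 1, a ∈ (−1/2 − 1/(2k), −1/2), and let g₀ : (0,∞) → ℝ be measurable with g₀(c y) = c^a g₀(y) for all c > 0, ∫_0^∞ |g₀(y) g₀(1+y)| dy < ∞, and define g(x_1,…,x_k) = ∏_{i=1}^k g₀(x_i). Then for every λ > 0 and s, t ≥ 0, ∫_{ℝ^k} h_t^λ(x) h_s^λ(x) dx = ∫_0^t ∫_0^s e^{−λ k |u−v|} · |u−v|^{k(2a+1)} · ( ∫_0^∞ g₀(y) g₀(1+y) e^{−2λ|u−v| y} dy )^k du dv, with absolute convergence. -/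

import Mathlib

open MeasureTheory Real Set

/-- The kernel `h_t^λ` of the tempered generalized Hermite process with
product kernel `g(x₁,…,x_k) = ∏ᵢ g₀(xᵢ)`. -/
noncomputable def tghProdKernel (k : ℕ) (g₀ : ℝ → ℝ) (lam t : ℝ)
    (x : Fin k → ℝ) : ℝ :=
  ∫ s in Set.Ioc (0 : ℝ) t,
    Set.indicator {s' : ℝ | ∀ i, x i < s'}
      (fun s' => ∏ i, (g₀ (s' - x i) * Real.exp (-lam * (s' - x i)))) s

namespace TGHaux

noncomputable def G (g₀ : ℝ → ℝ) (lam u x : ℝ) : ℝ :=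
  if x < u then g₀ (u - x) * Real.exp (-lam * (u - x)) else 0



lemma measurable_G {g₀ : ℝ → ℝ} (hg₀ : Measurable g₀) (lam : ℝ) :
    Measurable (fun p : ℝ × ℝ => G g₀ lam p.1 p.2) := by
  unfold G
  exact Measurable.ite (measurableSet_lt measurable_snd measurable_fst)
    ((hg₀.comp (measurable_fst.sub measurable_snd)).mul
      (((measurable_fst.sub measurable_snd).const_mul (-lam)).exp))
    measurable_const

lemma measurable_abs_rpow (β : ℝ) : Measurable fun x : ℝ => |x| ^ β := by
  have hfe : (fun x : ℝ => |x| ^ β)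
      = fun x => if x = 0 then (if β = 0 then 1 else 0)
          else Real.exp (Real.log |x| * β) := by
    funext x
    rcases eq_or_ne x 0 with h | h
    · rw [if_pos h, h, abs_zero]
      rcases eq_or_ne β 0 with hb | hb
      · rw [if_pos hb, hb, Real.rpow_zero]
      · rw [if_neg hb, Real.zero_rpow hb]
    · rw [if_neg h, Real.rpow_def_of_pos (abs_pos.mpr h)]
  rw [hfe]
  exact Measurable.ite (measurableSet_singleton 0) measurable_const
    (((Real.measurable_log.comp continuous_abs.measurable).mul_const β).exp)

lemma integrableOn_abs_rpow {β : ℝ} (hβ : -1 < β) {c : ℝ} (hc : 0 ≤ c) :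
    IntegrableOn (fun w : ℝ => |w| ^ β) (Icc (-c) c) := by
  have h1 : IntegrableOn (fun w : ℝ => |w| ^ β) (Ioc 0 c) := by
    have h := (intervalIntegral.intervalIntegrable_rpow' (a := 0) (b := c) hβ)
    rw [intervalIntegrable_iff_integrableOn_Ioc_of_le hc] at h
    exact h.congr_fun (fun x hx => by rw [abs_of_pos hx.1]) measurableSet_Ioc
  have hind : Integrable ((Ioc (0:ℝ) c).indicator fun w => |w| ^ β) :=
    (integrable_indicator_iff measurableSet_Ioc).mpr h1
  have hneg := hind.comp_neg
  have hfe : (fun w => (Ioc (0:ℝ) c).indicator (fun w => |w| ^ β) (-w))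
      = (Ico (-c) (0:ℝ)).indicator fun w => |w| ^ β := by
    funext w
    by_cases hw : -w ∈ Ioc (0:ℝ) c
    · rw [indicator_of_mem hw,
        indicator_of_mem (show w ∈ Ico (-c) (0:ℝ) by
          constructor
          · linarith [hw.2]
          · linarith [hw.1]), abs_neg]
    · rw [indicator_of_notMem hw, indicator_of_notMem (fun hw' : w ∈ Ico (-c) (0:ℝ) =>
        hw ⟨by linarith [hw'.2], by linarith [hw'.1]⟩)]
  rw [hfe] at hneg
  have h2 : IntegrableOn (fun w : ℝ => |w| ^ β) (Ico (-c) 0) :=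
    (integrable_indicator_iff measurableSet_Ico).mp hneg
  have h3 : IntegrableOn (fun w : ℝ => |w| ^ β) ({0} : Set ℝ) := by
    have hz : volume.restrict ({0} : Set ℝ) = 0 := by
      rw [Measure.restrict_eq_zero]; exact measure_singleton 0
    rw [IntegrableOn, hz]; exact integrable_zero_measure
  refine ((h2.union h1).union h3).mono_set ?_
  intro w hw
  rcases lt_trichotomy w 0 with h | h | h
  · exact Or.inl (Or.inl ⟨hw.1, h⟩)
  · exact Or.inr (by simp [h])
  · exact Or.inl (Or.inr ⟨h, hw.2⟩)



variable {g₀ : ℝ → ℝ} {a lam : ℝ}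

theorem core (hg₀ : Measurable g₀)
    (hhom : ∀ c : ℝ, 0 < c → ∀ y : ℝ, 0 < y → g₀ (c * y) = c ^ a * g₀ y)
    (hint : IntegrableOn (fun y : ℝ => |g₀ y * g₀ (1 + y)|) (Set.Ioi (0 : ℝ)))
    (hlam : 0 < lam) {u v : ℝ} (hvu : v < u) :
    Integrable (fun x => G g₀ lam u x * G g₀ lam v x) ∧
    (∫ x, G g₀ lam u x * G g₀ lam v x) =
      Real.exp (-lam * (u - v)) * (u - v) ^ (2*a+1) *
        (∫ y in Ioi (0:ℝ), g₀ y * g₀ (1+y) * Real.exp (-2*lam*(u-v)*y)) ∧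
    (∫ x, |G g₀ lam u x * G g₀ lam v x|) ≤
      (u - v) ^ (2*a+1) * (∫ y in Ioi (0:ℝ), |g₀ y * g₀ (1+y)|) := by
  set r := u - v with hrdef
  have hr : 0 < r := sub_pos.mpr hvu
  set φ : ℝ → ℝ := fun w =>
    if 0 < w then g₀ (w + r) * g₀ w * Real.exp (-lam * (2*w + r)) else 0 with hφ
  -- Step 1 : pointwise identification
  have hGφ : ∀ x, G g₀ lam u x * G g₀ lam v x = φ (v - x) := by
    intro x
    by_cases hx : x < v
    · simp only [hφ]
      rw [G, G, if_pos (hx.trans hvu), if_pos hx, if_pos (sub_pos.mpr hx)]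
      rw [show u - x = (v - x) + r from by rw [hrdef]; ring]
      rw [show -lam * (2*(v-x) + r) = (-lam * ((v-x)+r)) + (-lam * (v-x)) from by ring,
        Real.exp_add]
      ring
    · simp only [hφ]
      rw [G, G, if_neg hx, mul_zero,
        if_neg (fun h : (0:ℝ) < v - x => hx (by linarith))]
  -- Step 2 : scaling identity
  have hφr : ∀ y : ℝ, φ (r * y) =
      (Ioi (0:ℝ)).indicator
        (fun y => (r ^ (2*a) * Real.exp (-lam*r)) *
          (g₀ y * g₀ (1+y) * Real.exp (-2*lam*r*y))) y := by
    intro y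
    by_cases hy : 0 < y
    · rw [Set.indicator_of_mem (Set.mem_Ioi.mpr hy)]
      simp only [hφ]
      rw [if_pos (mul_pos hr hy)]
      rw [show r * y + r = r * (1 + y) from by ring,
        hhom r hr (1+y) (by linarith), hhom r hr y hy,
        show -lam * (2*(r*y) + r) = (-lam*r) + (-2*lam*r*y) from by ring, Real.exp_add]
      rw [show r ^ (2*a) = r ^ a * r ^ a from by rw [← Real.rpow_add hr]; ring_nf]
      ring
    · rw [Set.indicator_of_notMem (fun h : y ∈ Ioi (0:ℝ) => hy (Set.mem_Ioi.mp h))]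
      simp only [hφ]
      exact if_neg (not_lt.mpr (mul_nonpos_of_nonneg_of_nonpos hr.le (not_lt.mp hy)))
  -- Step 3 : integrability of the target integrand
  have hψmeas : Measurable (fun y : ℝ => g₀ y * g₀ (1+y) * Real.exp (-2*lam*r*y)) :=
    ((hg₀.mul (hg₀.comp (measurable_const.add measurable_id))).mul
      ((measurable_id.const_mul (-2*lam*r)).exp))
  have hexple : ∀ y : ℝ, 0 < y → Real.exp (-2*lam*r*y) ≤ 1 := by
    intro y hy
    rw [Real.exp_le_one_iff]
    nlinarith [mul_pos (mul_pos hlam hr) hy]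
  have hψint : IntegrableOn (fun y => g₀ y * g₀ (1+y) * Real.exp (-2*lam*r*y)) (Ioi (0:ℝ)) := by
    refine Integrable.mono' hint hψmeas.aestronglyMeasurable ?_
    refine (ae_restrict_iff' measurableSet_Ioi).mpr (ae_of_all _ fun y hy => ?_)
    rw [Real.norm_eq_abs, abs_mul, abs_of_pos (Real.exp_pos _)]
    calc |g₀ y * g₀ (1+y)| * Real.exp (-2*lam*r*y) ≤ |g₀ y * g₀ (1+y)| * 1 :=
          mul_le_mul_of_nonneg_left (hexple y hy) (abs_nonneg _)
      _ = |g₀ y * g₀ (1+y)| := mul_one _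
  have hψaint : IntegrableOn (fun y => |g₀ y * g₀ (1+y)| * Real.exp (-2*lam*r*y)) (Ioi (0:ℝ)) := by
    refine Integrable.mono' hint
      (((hg₀.mul (hg₀.comp (measurable_const.add measurable_id))).abs.mul
        ((measurable_id.const_mul (-2*lam*r)).exp)).aestronglyMeasurable) ?_
    refine (ae_restrict_iff' measurableSet_Ioi).mpr (ae_of_all _ fun y hy => ?_)
    rw [Real.norm_eq_abs, abs_mul, abs_abs, abs_of_pos (Real.exp_pos _)]
    calc |g₀ y * g₀ (1+y)| * Real.exp (-2*lam*r*y) ≤ |g₀ y * g₀ (1+y)| * 1 :=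
          mul_le_mul_of_nonneg_left (hexple y hy) (abs_nonneg _)
      _ = |g₀ y * g₀ (1+y)| := mul_one _
  -- Step 4 : integrability of φ
  have hφscaled : Integrable (fun y => φ (r * y)) := by
    rw [show (fun y => φ (r * y)) = (Ioi (0:ℝ)).indicator
        (fun y => (r ^ (2*a) * Real.exp (-lam*r)) *
          (g₀ y * g₀ (1+y) * Real.exp (-2*lam*r*y))) from funext hφr]
    rw [integrable_indicator_iff measurableSet_Ioi]
    exact hψint.const_mul _
  have hφint : Integrable φ := by
    have h2 := hφscaled.comp_mul_left' (inv_ne_zero hr.ne')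
    simpa [mul_inv_cancel_left₀ hr.ne'] using h2
  have hHint : Integrable (fun x => G g₀ lam u x * G g₀ lam v x) := by
    have h := (integrable_comp_sub_left φ v).mpr hφint
    exact h.congr (ae_of_all _ fun x => (hGφ x).symm)
  -- Step 5 : value of ∫ φ
  have hIφr : ∫ y, φ (r * y) = (r ^ (2*a) * Real.exp (-lam*r)) *
      ∫ y in Ioi (0:ℝ), g₀ y * g₀ (1+y) * Real.exp (-2*lam*r*y) := by
    rw [show (fun y => φ (r * y)) = (Ioi (0:ℝ)).indicator
        (fun y => (r ^ (2*a) * Real.exp (-lam*r)) *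
          (g₀ y * g₀ (1+y) * Real.exp (-2*lam*r*y))) from funext hφr]
    rw [integral_indicator measurableSet_Ioi, integral_const_mul]
  have hIφ : ∫ w, φ w = r ^ (2*a+1) * Real.exp (-lam*r) *
      ∫ y in Ioi (0:ℝ), g₀ y * g₀ (1+y) * Real.exp (-2*lam*r*y) := by
    have h := MeasureTheory.Measure.integral_comp_mul_left φ r
    rw [hIφr, abs_of_pos (inv_pos.mpr hr), smul_eq_mul] at h
    have h4 : ∫ w, φ w = r * (r⁻¹ * ∫ w, φ w) := (mul_inv_cancel_left₀ hr.ne' _).symm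
    rw [h4, ← h, show r ^ (2*a+1) = r ^ (2*a) * r from by
      rw [Real.rpow_add hr, Real.rpow_one]]
    ring
  have hval : ∫ x, G g₀ lam u x * G g₀ lam v x =
      Real.exp (-lam * r) * r ^ (2*a+1) *
        ∫ y in Ioi (0:ℝ), g₀ y * g₀ (1+y) * Real.exp (-2*lam*r*y) := by
    rw [show (fun x => G g₀ lam u x * G g₀ lam v x) = (fun x => φ (v - x)) from funext hGφ]
    rw [integral_sub_left_eq_self φ volume v, hIφ]
    ring
  -- Step 6 : bound on the absolute integral
  have hφar : ∀ y : ℝ, |φ (r * y)| =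
      (Ioi (0:ℝ)).indicator
        (fun y => (r ^ (2*a) * Real.exp (-lam*r)) *
          (|g₀ y * g₀ (1+y)| * Real.exp (-2*lam*r*y))) y := by
    intro y
    rw [hφr y]
    by_cases hy : y ∈ Ioi (0:ℝ)
    · rw [Set.indicator_of_mem hy, Set.indicator_of_mem hy, abs_mul, abs_mul, abs_mul,
        abs_of_pos (Real.exp_pos (-lam*r)), abs_of_pos (Real.exp_pos _),
        abs_of_pos (Real.rpow_pos_of_pos hr _)]
    · rw [Set.indicator_of_notMem hy, Set.indicator_of_notMem hy, abs_zero]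
  have hIφa : ∫ w, |φ w| = r * ((r ^ (2*a) * Real.exp (-lam*r)) *
      ∫ y in Ioi (0:ℝ), |g₀ y * g₀ (1+y)| * Real.exp (-2*lam*r*y)) := by
    have h := MeasureTheory.Measure.integral_comp_mul_left (fun w => |φ w|) r
    rw [show (fun x => |φ (r * x)|) = (Ioi (0:ℝ)).indicator
        (fun y => (r ^ (2*a) * Real.exp (-lam*r)) *
          (|g₀ y * g₀ (1+y)| * Real.exp (-2*lam*r*y))) from funext hφar] at h
    rw [integral_indicator measurableSet_Ioi, integral_const_mul,
      abs_of_pos (inv_pos.mpr hr), smul_eq_mul] at h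
    have h4 : ∫ w, |φ w| = r * (r⁻¹ * ∫ w, |φ w|) := (mul_inv_cancel_left₀ hr.ne' _).symm
    rw [h4, ← h]
  have hJle : (∫ y in Ioi (0:ℝ), |g₀ y * g₀ (1+y)| * Real.exp (-2*lam*r*y))
      ≤ ∫ y in Ioi (0:ℝ), |g₀ y * g₀ (1+y)| := by
    refine setIntegral_mono_on hψaint hint measurableSet_Ioi fun y hy => ?_
    calc |g₀ y * g₀ (1+y)| * Real.exp (-2*lam*r*y) ≤ |g₀ y * g₀ (1+y)| * 1 :=
          mul_le_mul_of_nonneg_left (hexple y hy) (abs_nonneg _)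
      _ = |g₀ y * g₀ (1+y)| := mul_one _
  have hJ0 : 0 ≤ ∫ y in Ioi (0:ℝ), |g₀ y * g₀ (1+y)| * Real.exp (-2*lam*r*y) :=
    integral_nonneg fun y => mul_nonneg (abs_nonneg _) (Real.exp_pos _).le
  have habs : (∫ x, |G g₀ lam u x * G g₀ lam v x|) ≤
      r ^ (2*a+1) * ∫ y in Ioi (0:ℝ), |g₀ y * g₀ (1+y)| := by
    rw [show (fun x => |G g₀ lam u x * G g₀ lam v x|) = (fun x => |φ (v - x)|) from
      funext fun x => by rw [hGφ x]]
    rw [integral_sub_left_eq_self (fun w => |φ w|) volume v, hIφa]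
    rw [show r ^ (2*a+1) = r * r ^ (2*a) from by
      rw [Real.rpow_add hr, Real.rpow_one]; ring]
    have h2a : (0:ℝ) < r ^ (2*a) := Real.rpow_pos_of_pos hr _
    have hee : Real.exp (-lam*r) ≤ 1 := by
      rw [Real.exp_le_one_iff]; nlinarith [mul_pos hlam hr]
    have hee0 : (0:ℝ) < Real.exp (-lam*r) := Real.exp_pos _
    have hM0 : (0:ℝ) ≤ ∫ y in Ioi (0:ℝ), |g₀ y * g₀ (1+y)| :=
      integral_nonneg fun y => abs_nonneg _
    have key : Real.exp (-lam*r) *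
        (∫ y in Ioi (0:ℝ), |g₀ y * g₀ (1+y)| * Real.exp (-2*lam*r*y))
        ≤ ∫ y in Ioi (0:ℝ), |g₀ y * g₀ (1+y)| := by nlinarith
    nlinarith [mul_le_mul_of_nonneg_left key (mul_pos hr h2a).le]
  exact ⟨hHint, hval, habs⟩


theorem slice (hg₀ : Measurable g₀)
    (hhom : ∀ c : ℝ, 0 < c → ∀ y : ℝ, 0 < y → g₀ (c * y) = c ^ a * g₀ y)
    (hint : IntegrableOn (fun y : ℝ => |g₀ y * g₀ (1 + y)|) (Set.Ioi (0 : ℝ)))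
    (hlam : 0 < lam) {u v : ℝ} (huv : u ≠ v) :
    Integrable (fun x => G g₀ lam u x * G g₀ lam v x) ∧
    (∫ x, G g₀ lam u x * G g₀ lam v x) =
      Real.exp (-lam * |u - v|) * |u - v| ^ (2*a+1) *
        (∫ y in Ioi (0:ℝ), g₀ y * g₀ (1+y) * Real.exp (-2*lam*|u - v| * y)) ∧
    (∫ x, |G g₀ lam u x * G g₀ lam v x|) ≤
      |u - v| ^ (2*a+1) * (∫ y in Ioi (0:ℝ), |g₀ y * g₀ (1+y)|) := by
  rcases huv.lt_or_gt with h | h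
  · have hc := core hg₀ hhom hint hlam h
    have hfe : (fun x => G g₀ lam u x * G g₀ lam v x)
        = fun x => G g₀ lam v x * G g₀ lam u x := funext fun x => mul_comm _ _
    have hfa : (fun x => |G g₀ lam u x * G g₀ lam v x|)
        = fun x => |G g₀ lam v x * G g₀ lam u x| := funext fun x => by rw [mul_comm]
    rw [abs_sub_comm, abs_of_pos (sub_pos.mpr h), hfe, hfa]
    exact hc
  · rw [abs_of_pos (sub_pos.mpr h)]
    exact core hg₀ hhom hint hlam h

end TGHaux

open TGHaux in
lemma tghProdKernel_eq (k : ℕ) (g₀ : ℝ → ℝ) (lam t : ℝ) (x : Fin k → ℝ) :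
    tghProdKernel k g₀ lam t x = ∫ u in Set.Ioc (0:ℝ) t, ∏ i, G g₀ lam u (x i) := by
  unfold tghProdKernel
  refine integral_congr_ae (ae_of_all _ fun s' => ?_)
  by_cases h : ∀ i, x i < s'
  · rw [Set.indicator_of_mem (show s' ∈ {s'' : ℝ | ∀ i, x i < s''} from h)]
    exact Finset.prod_congr rfl fun i _ => by rw [G, if_pos (h i)]
  · rw [Set.indicator_of_notMem (show s' ∉ {s'' : ℝ | ∀ i, x i < s''} from h)]
    push_neg at h
    obtain ⟨i, hi⟩ := h
    exact (Finset.prod_eq_zero (Finset.mem_univ i)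
      (by rw [G, if_neg (not_lt.mpr hi)])).symm



open TGHaux in
theorem stmt6 {k : ℕ} (hk : 1 ≤ k) (a : ℝ)
    (ha₁ : -1/2 - 1/(2*(k : ℝ)) < a) (ha₂ : a < -1/2)
    (g₀ : ℝ → ℝ) (hg₀ : Measurable g₀)
    (hhom : ∀ c : ℝ, 0 < c → ∀ y : ℝ, 0 < y → g₀ (c * y) = c ^ a * g₀ y)
    (hint : IntegrableOn (fun y : ℝ => |g₀ y * g₀ (1 + y)|) (Set.Ioi (0 : ℝ)))
    (lam : ℝ) (hlam : 0 < lam) (s t : ℝ) (hs : 0 ≤ s) (ht : 0 ≤ t) :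
    -- absolute convergence
    Integrable (fun x : Fin k → ℝ =>
      tghProdKernel k g₀ lam t x * tghProdKernel k g₀ lam s x) ∧
    -- the covariance identity
    (∫ x : Fin k → ℝ, tghProdKernel k g₀ lam t x * tghProdKernel k g₀ lam s x) =
      ∫ u in Set.Ioc (0 : ℝ) t, ∫ v in Set.Ioc (0 : ℝ) s,
        Real.exp (-lam * (k : ℝ) * |u - v|) * |u - v| ^ ((k : ℝ) * (2 * a + 1)) *
          (∫ y in Set.Ioi (0 : ℝ),
            g₀ y * g₀ (1 + y) * Real.exp (-2 * lam * |u - v| * y)) ^ k := by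
  have hk0 : (0:ℝ) < k := by exact_mod_cast Nat.lt_of_lt_of_le Nat.zero_lt_one hk
  set β : ℝ := (k:ℝ) * (2*a+1) with hβdef
  have hβ1 : -1 < β := by
    have e : 2*(k:ℝ) * (1/(2*(k:ℝ))) = 1 := by field_simp
    nlinarith [mul_lt_mul_of_pos_left ha₁ (by positivity : (0:ℝ) < 2*(k:ℝ))]
  have hβ0 : β < 0 := mul_neg_of_pos_of_neg hk0 (by linarith)
  haveI ht' : IsFiniteMeasure (volume.restrict (Ioc (0:ℝ) t)) :=
    ⟨by rw [Measure.restrict_apply_univ]; exact measure_Ioc_lt_top⟩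
  haveI hs' : IsFiniteMeasure (volume.restrict (Ioc (0:ℝ) s)) :=
    ⟨by rw [Measure.restrict_apply_univ]; exact measure_Ioc_lt_top⟩
  set M : ℝ := ∫ y in Ioi (0:ℝ), |g₀ y * g₀ (1+y)| with hM
  have hM0 : 0 ≤ M := integral_nonneg fun y => abs_nonneg _
  set F : (ℝ × ℝ) × (Fin k → ℝ) → ℝ :=
    fun q => ∏ i, (G g₀ lam q.1.1 (q.2 i) * G g₀ lam q.1.2 (q.2 i)) with hF
  have hGm := measurable_G hg₀ lam
  have hFmeas : Measurable F := by
    rw [hF]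
    refine Finset.measurable_prod _ fun i _ => Measurable.mul ?_ ?_
    · exact hGm.comp ((measurable_fst.comp measurable_fst).prodMk
        ((measurable_pi_apply i).comp measurable_snd))
    · exact hGm.comp ((measurable_snd.comp measurable_fst).prodMk
        ((measurable_pi_apply i).comp measurable_snd))
  -- the diagonal is null
  have hdiag : ∀ᵐ p : ℝ × ℝ
      ∂((volume.restrict (Ioc (0:ℝ) t)).prod (volume.restrict (Ioc (0:ℝ) s))),
      p.1 ≠ p.2 := by
    have hDm : MeasurableSet {p : ℝ × ℝ | p.1 = p.2} :=
      measurableSet_eq_fun measurable_fst measurable_snd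
    have h0 : ((volume.restrict (Ioc (0:ℝ) t)).prod (volume.restrict (Ioc (0:ℝ) s)))
        {p : ℝ × ℝ | p.1 = p.2} = 0 := by
      rw [Measure.measure_prod_null hDm]
      refine Filter.Eventually.of_forall fun u => ?_
      have h1 : (Prod.mk u ⁻¹' {p : ℝ × ℝ | p.1 = p.2}) = {u} := by
        ext z; simp [eq_comm]
      show (volume.restrict (Ioc (0:ℝ) s)) (Prod.mk u ⁻¹' {p : ℝ × ℝ | p.1 = p.2}) = 0
      rw [h1, Measure.restrict_apply (measurableSet_singleton u)]
      exact measure_mono_null Set.inter_subset_left (measure_singleton u)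
    filter_upwards [measure_eq_zero_iff_ae_notMem.mp h0] with p hp
    exact hp
  -- the scalar bound function is integrable on the product
  have hβm : Measurable fun p : ℝ × ℝ => |p.1 - p.2| ^ β :=
    (measurable_abs_rpow β).comp (measurable_fst.sub measurable_snd)
  have hc0 : (0:ℝ) ≤ s + t := by linarith
  set Fb : ℝ → ℝ := (Icc (-(s+t)) (s+t)).indicator (fun w => |w| ^ β) with hFb
  have hFbInt : Integrable Fb :=
    (integrable_indicator_iff measurableSet_Icc).mpr (integrableOn_abs_rpow hβ1 hc0)
  have hFb0 : ∀ w, 0 ≤ Fb w := fun w =>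
    Set.indicator_nonneg (fun w _ => Real.rpow_nonneg (abs_nonneg _) _) w
  set K : ℝ := ∫ w, Fb w with hK
  have hB2 : ∀ u ∈ Ioc (0:ℝ) t,
      IntegrableOn (fun v => |u - v| ^ β) (Ioc (0:ℝ) s) ∧
      (∫ v in Ioc (0:ℝ) s, |u - v| ^ β) ≤ K := by
    intro u hu
    have hptw : ∀ v, (Ioc (0:ℝ) s).indicator (fun v => |u - v| ^ β) v ≤ Fb (u - v) := by
      intro v
      by_cases hv : v ∈ Ioc (0:ℝ) s
      · rw [Set.indicator_of_mem hv, hFb,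
          Set.indicator_of_mem (show u - v ∈ Icc (-(s+t)) (s+t) from
            ⟨by linarith [hu.1, hv.2], by linarith [hu.2, hv.1]⟩)]
      · rw [Set.indicator_of_notMem hv]; exact hFb0 _
    have hcomp : Integrable (fun v => Fb (u - v)) :=
      (integrable_comp_sub_left Fb u).mpr hFbInt
    have hindm : Measurable ((Ioc (0:ℝ) s).indicator (fun v => |u - v| ^ β)) :=
      ((measurable_abs_rpow β).comp (measurable_const.sub measurable_id)).indicator
        measurableSet_Ioc
    have hindInt : Integrable ((Ioc (0:ℝ) s).indicator (fun v => |u - v| ^ β)) := by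
      refine hcomp.mono' hindm.aestronglyMeasurable (ae_of_all _ fun v => ?_)
      rw [Real.norm_eq_abs, abs_of_nonneg (Set.indicator_nonneg
        (fun w _ => Real.rpow_nonneg (abs_nonneg _) _) v)]
      exact hptw v
    refine ⟨(integrable_indicator_iff measurableSet_Ioc).mp hindInt, ?_⟩
    rw [← integral_indicator measurableSet_Ioc]
    calc ∫ v, (Ioc (0:ℝ) s).indicator (fun v => |u - v| ^ β) v
        ≤ ∫ v, Fb (u - v) := integral_mono hindInt hcomp hptw
      _ = K := by rw [integral_sub_left_eq_self Fb volume u]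
  have hB3 : Integrable (fun p : ℝ × ℝ => |p.1 - p.2| ^ β)
      ((volume.restrict (Ioc (0:ℝ) t)).prod (volume.restrict (Ioc (0:ℝ) s))) := by
    rw [integrable_prod_iff hβm.aestronglyMeasurable]
    constructor
    · filter_upwards [ae_restrict_mem measurableSet_Ioc] with u hu
      exact (hB2 u hu).1
    · refine (integrable_const K).mono' ?_ ?_
      · exact (hβm.norm.aestronglyMeasurable).integral_prod_right'
      · filter_upwards [ae_restrict_mem measurableSet_Ioc] with u hu
        have heq : (fun v => ‖|u - v| ^ β‖) = fun v => |u - v| ^ β :=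
          funext fun v => by
            rw [Real.norm_eq_abs, abs_of_nonneg (Real.rpow_nonneg (abs_nonneg _) _)]
        rw [Real.norm_eq_abs, abs_of_nonneg (integral_nonneg fun v => norm_nonneg _)]
        calc (∫ v, ‖|u - v| ^ β‖ ∂(volume.restrict (Ioc (0:ℝ) s)))
            = ∫ v in Ioc (0:ℝ) s, |u - v| ^ β := by rw [heq]
          _ ≤ K := (hB2 u hu).2
  -- the big integrability statement (Goal A)
  have hA : Integrable F
      (((volume.restrict (Ioc (0:ℝ) t)).prod (volume.restrict (Ioc (0:ℝ) s))).prod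
        volume) := by
    rw [integrable_prod_iff hFmeas.aestronglyMeasurable]
    refine ⟨?_, ?_⟩
    · filter_upwards [hdiag] with p hp
      exact Integrable.fintype_prod
        (f := fun _ : Fin k => fun x : ℝ => G g₀ lam p.1 x * G g₀ lam p.2 x)
        (fun i => (slice (a := a) hg₀ hhom hint hlam hp).1)
    · refine ((hB3.const_mul (M ^ k)).mono' ?_ ?_)
      · exact (hFmeas.norm.aestronglyMeasurable).integral_prod_right'
      · filter_upwards [hdiag] with p hp
        have h1 : (fun x : Fin k → ℝ => ‖F (p, x)‖)
            = fun x => ∏ i, |G g₀ lam p.1 (x i) * G g₀ lam p.2 (x i)| := by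
          funext x
          rw [hF, Real.norm_eq_abs, Finset.abs_prod]
        have h2 : (∫ x : Fin k → ℝ, ‖F (p, x)‖)
            = (∫ w : ℝ, |G g₀ lam p.1 w * G g₀ lam p.2 w|) ^ k := by
          rw [h1, integral_fintype_prod_volume_eq_pow
            (fun w : ℝ => |G g₀ lam p.1 w * G g₀ lam p.2 w|), Fintype.card_fin]
        rw [Real.norm_eq_abs, abs_of_nonneg (integral_nonneg fun x => norm_nonneg _), h2]
        have h3 := (slice (a := a) hg₀ hhom hint hlam hp).2.2
        have h4 : (∫ w : ℝ, |G g₀ lam p.1 w * G g₀ lam p.2 w|) ^ k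
            ≤ (|p.1 - p.2| ^ (2*a+1) * M) ^ k :=
          pow_le_pow_left₀ (integral_nonneg fun w => abs_nonneg _) h3 k
        refine h4.trans_eq ?_
        rw [mul_pow, ← Real.rpow_natCast (|p.1 - p.2| ^ (2*a+1)) k,
          ← Real.rpow_mul (abs_nonneg _), hβdef,
          show (2*a+1) * (k:ℝ) = (k:ℝ) * (2*a+1) from mul_comm _ _]
        ring
  -- pointwise product-of-kernels identity
  have hker : ∀ x : Fin k → ℝ,
      tghProdKernel k g₀ lam t x * tghProdKernel k g₀ lam s x
        = ∫ p : ℝ × ℝ, F (p, x)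
            ∂((volume.restrict (Ioc (0:ℝ) t)).prod (volume.restrict (Ioc (0:ℝ) s))) := by
    intro x
    rw [tghProdKernel_eq, tghProdKernel_eq, ← integral_prod_mul
      (f := fun u => ∏ i, G g₀ lam u (x i)) (g := fun v => ∏ i, G g₀ lam v (x i))]
    exact integral_congr_ae (ae_of_all _ fun p => (Finset.prod_mul_distrib).symm)
  have hswap : Integrable (fun q : (Fin k → ℝ) × (ℝ × ℝ) => F (q.2, q.1))
      (volume.prod
        ((volume.restrict (Ioc (0:ℝ) t)).prod (volume.restrict (Ioc (0:ℝ) s)))) :=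
    hA.swap
  have hint1 : Integrable (fun x : Fin k → ℝ => ∫ p : ℝ × ℝ, F (p, x)
      ∂((volume.restrict (Ioc (0:ℝ) t)).prod (volume.restrict (Ioc (0:ℝ) s)))) volume :=
    hswap.integral_prod_left
  constructor
  · exact hint1.congr (ae_of_all _ fun x => (hker x).symm)
  calc (∫ x : Fin k → ℝ, tghProdKernel k g₀ lam t x * tghProdKernel k g₀ lam s x)
      = ∫ x : Fin k → ℝ, ∫ p : ℝ × ℝ, F (p, x)
          ∂((volume.restrict (Ioc (0:ℝ) t)).prod (volume.restrict (Ioc (0:ℝ) s))) :=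
        integral_congr_ae (ae_of_all _ hker)
    _ = ∫ p : ℝ × ℝ, ∫ x : Fin k → ℝ, F (p, x)
          ∂volume ∂((volume.restrict (Ioc (0:ℝ) t)).prod (volume.restrict (Ioc (0:ℝ) s))) :=
        integral_integral_swap (f := fun (x : Fin k → ℝ) (p : ℝ × ℝ) => F (p, x)) hswap
    _ = ∫ u in Ioc (0:ℝ) t, ∫ v in Ioc (0:ℝ) s, ∫ x : Fin k → ℝ, F ((u, v), x) :=
        integral_prod _ hA.integral_prod_left
    _ = ∫ u in Set.Ioc (0 : ℝ) t, ∫ v in Set.Ioc (0 : ℝ) s,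
          Real.exp (-lam * (k : ℝ) * |u - v|) * |u - v| ^ ((k : ℝ) * (2 * a + 1)) *
            (∫ y in Set.Ioi (0 : ℝ),
              g₀ y * g₀ (1 + y) * Real.exp (-2 * lam * |u - v| * y)) ^ k := by
        refine integral_congr_ae (ae_of_all _ fun u => ?_)
        have hne : ∀ᵐ v ∂(volume.restrict (Ioc (0:ℝ) s)), v ≠ u := by
          have h0 : (volume.restrict (Ioc (0:ℝ) s)) {u} = 0 := by
            rw [Measure.restrict_apply (measurableSet_singleton u)]
            exact measure_mono_null Set.inter_subset_left (measure_singleton u)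
          filter_upwards [measure_eq_zero_iff_ae_notMem.mp h0] with v hv
          simpa using hv
        refine integral_congr_ae ?_
        filter_upwards [hne] with v hv
        have huv : u ≠ v := fun h => hv h.symm
        have h1 : (∫ x : Fin k → ℝ, F ((u, v), x))
            = (∫ w : ℝ, G g₀ lam u w * G g₀ lam v w) ^ k := by
          simp only [hF]
          rw [integral_fintype_prod_volume_eq_pow
            (fun w : ℝ => G g₀ lam u w * G g₀ lam v w), Fintype.card_fin]
        rw [h1, (slice (a := a) hg₀ hhom hint hlam huv).2.1]
        rw [mul_pow, mul_pow, ← Real.rpow_natCast (|u - v| ^ (2*a+1)) k,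
          ← Real.rpow_mul (abs_nonneg _), ← Real.exp_nat_mul]
        rw [show (k:ℝ) * (-lam * |u - v|) = -lam * (k:ℝ) * |u - v| from by ring,
          show (2*a+1) * (k:ℝ) = (k:ℝ) * (2*a+1) from mul_comm _ _]
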